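/- Let p be prime, n ≥ 1, 1 ≤ e ≤ n, m ≥ 1, and let δ, Φ_1, ..., Φ_n be integers with Φ_j = 0 for j ≤ n-e, gcd(Φ_j, p) = 1 for j > n-e, and δ = (p-1) Σ_{j=1}^n Φ_j p^{n-j} + (p^e - 1). Then Σ_{k=0}^{p^n - 1} ⌊(m δ - Σ_{j=1}^n a_j^{(k)} Φ_j p^{n-j}) / p^e⌋ = (2m-1) p^{n-e} δ / 2, where a_j^{(k)} are the p-adic digits of k. -/

import Mathlib

open Finset


lemma sum_range_mul_split {M : Type*} [AddCommMonoid M] (a b : ℕ) (f : ℕ → M) :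
    ∑ k ∈ range (a * b), f k = ∑ i ∈ range b, ∑ r ∈ range a, f (r + a * i) := by
  induction b with
  | zero => simp
  | succ b ih =>
      rw [Finset.sum_range_succ, Nat.mul_succ, Finset.range_eq_Ico,
        ← Finset.sum_Ico_consecutive f (Nat.zero_le (a*b)) (Nat.le_add_right (a*b) a),
        ← Finset.range_eq_Ico, ih, Finset.sum_Ico_eq_sum_range]
      congr 1
      simp [Nat.add_sub_cancel_left, add_comm]

lemma sum_range_div' (a b : ℕ) (ha : 0 < a) (h : ℕ → ℤ) :
    ∑ k ∈ range (a * b), h (k / a) = (a : ℤ) * ∑ i ∈ range b, h i := by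
  rw [sum_range_mul_split, Finset.mul_sum]
  refine Finset.sum_congr rfl fun i _ => ?_
  have : ∀ r ∈ range a, h ((r + a * i) / a) = h i := fun r hr => by
    rw [Nat.add_mul_div_left _ _ ha, Nat.div_eq_of_lt (mem_range.mp hr), Nat.zero_add]
  rw [Finset.sum_congr rfl this, Finset.sum_const, card_range, nsmul_eq_mul]

lemma sum_range_mod' (a b : ℕ) (h : ℕ → ℤ) :
    ∑ k ∈ range (a * b), h (k % a) = (b : ℤ) * ∑ r ∈ range a, h r := by
  rw [sum_range_mul_split]
  have : ∀ i ∈ range b, ∑ r ∈ range a, h ((r + a * i) % a) = ∑ r ∈ range a, h r := by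
    intro i _
    refine Finset.sum_congr rfl fun r hr => ?_
    rw [Nat.add_mul_mod_self_left, Nat.mod_eq_of_lt (mem_range.mp hr)]
  rw [Finset.sum_congr rfl this, Finset.sum_const, card_range, nsmul_eq_mul]

lemma digit_sum' (p : ℕ) (hp : 0 < p) (n j : ℕ) (hj1 : 1 ≤ j) (hjn : j ≤ n) :
    2 * ∑ k ∈ range (p ^ n), ((k / p ^ (j-1) % p : ℕ) : ℤ) = (p:ℤ)^n * ((p:ℤ) - 1) := by
  have h1 : p ^ n = p ^ (j-1) * (p * p ^ (n - j)) := by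
    rw [← pow_succ', ← pow_add]; congr 1; omega
  rw [h1, sum_range_div' _ _ (pow_pos hp _) (fun q => ((q % p : ℕ) : ℤ)),
    sum_range_mod' p (p ^ (n-j)) (fun r => (r : ℤ))]
  have gauss : (∑ r ∈ range p, (r:ℤ)) * 2 = (p:ℤ) * ((p:ℤ) - 1) := by
    have h := Finset.sum_range_id_mul_two p
    have h2 : ((p:ℤ) - 1) = ((p - 1 : ℕ) : ℤ) := by
      rw [Nat.cast_sub hp]; push_cast; ring
    rw [h2, ← Nat.cast_sum]; exact_mod_cast h
  have hpow : (p:ℤ)^(j-1) * (p:ℤ)^(n-j) * (p:ℤ) = (p:ℤ)^n := by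
    rw [← pow_add, ← pow_succ]; congr 1; omega
  push_cast
  linear_combination ((p:ℤ)^(j-1)*(p:ℤ)^(n-j)) * gauss + ((p:ℤ)-1) * hpow

lemma digit_of_mod (p : ℕ) (d i t : ℕ) (hi : i < d) :
    (t % p ^ d) / p ^ i % p = t / p ^ i % p := by
  rw [← Nat.mod_mul_right_div_self, ← Nat.mod_mul_right_div_self,
    Nat.mod_mod_of_dvd _ (by rw [← pow_succ]; exact pow_dvd_pow p hi)]

lemma V_inj (p : ℕ) (hp : p.Prime) : ∀ (d : ℕ) (Ψ : ℕ → ℤ),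
    (∀ i, i < d → IsCoprime (Ψ i) (p:ℤ)) →
    ∀ t t', t < p ^ d → t' < p ^ d →
    ((p:ℤ)^d ∣ (∑ i ∈ range d, ((t / p^i % p : ℕ):ℤ) * Ψ i * (p:ℤ)^(d-1-i))
              - ∑ i ∈ range d, ((t' / p^i % p : ℕ):ℤ) * Ψ i * (p:ℤ)^(d-1-i)) → t = t' := by
  intro d
  induction d with
  | zero => intro Ψ _ t t' ht ht' _; simp at ht ht'; omega
  | succ d ih =>
    intro Ψ hΨ t t' ht ht' hdvd
    have hppos : 0 < p := hp.pos
    have hsplit : ∀ s : ℕ, ∑ i ∈ range (d+1), ((s / p^i % p : ℕ):ℤ) * Ψ i * (p:ℤ)^(d+1-1-i)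
        = (p:ℤ) * (∑ i ∈ range d, ((s / p^i % p : ℕ):ℤ) * Ψ i * (p:ℤ)^(d-1-i))
          + ((s / p^d % p : ℕ):ℤ) * Ψ d := by
      intro s
      rw [Finset.sum_range_succ, Finset.mul_sum]
      congr 1
      · refine Finset.sum_congr rfl fun i hi => ?_
        have hdi : d + 1 - 1 - i = (d-1-i) + 1 := by have := mem_range.mp hi; omega
        rw [hdi, pow_succ]; ring
      · simp
    rw [hsplit, hsplit] at hdvd
    set A := ∑ i ∈ range d, ((t / p^i % p : ℕ):ℤ) * Ψ i * (p:ℤ)^(d-1-i) with hA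
    set B := ∑ i ∈ range d, ((t' / p^i % p : ℕ):ℤ) * Ψ i * (p:ℤ)^(d-1-i) with hB
    have hdvd' : (p:ℤ)^(d+1) ∣ (p:ℤ) * (A - B)
        + (((t / p^d % p : ℕ):ℤ) - ((t' / p^d % p : ℕ):ℤ)) * Ψ d := by
      convert hdvd using 1; ring
    have hpd : (p:ℤ) ∣ (((t / p^d % p : ℕ):ℤ) - ((t' / p^d % p : ℕ):ℤ)) * Ψ d := by
      have h1 : (p:ℤ) ∣ (p:ℤ)^(d+1) := dvd_pow_self _ (Nat.succ_ne_zero d)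
      have h2 := h1.trans hdvd'
      have h3 : (p:ℤ) ∣ (p:ℤ) * (A - B) := Dvd.intro _ rfl
      exact (dvd_add_right h3).mp h2
    have hdig : (((t / p^d % p : ℕ):ℤ) - ((t' / p^d % p : ℕ):ℤ)) = 0 := by
      have hcop : IsCoprime ((p:ℤ)) (Ψ d) := (hΨ d (Nat.lt_succ_self d)).symm
      have h4 : (p:ℤ) ∣ (((t / p^d % p : ℕ):ℤ) - ((t' / p^d % p : ℕ):ℤ)) :=
        hcop.dvd_of_dvd_mul_right hpd
      have hm1 : t / p^d % p < p := Nat.mod_lt _ hppos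
      have hm2 : t' / p^d % p < p := Nat.mod_lt _ hppos
      exact Int.eq_zero_of_dvd_of_natAbs_lt_natAbs h4 (by omega)
    have hdigN : t / p^d % p = t' / p^d % p := by exact_mod_cast sub_eq_zero.mp hdig
    have hdivt : t / p^d < p := Nat.div_lt_of_lt_mul (by rw [← pow_succ]; exact ht)
    have hdivt' : t' / p^d < p := Nat.div_lt_of_lt_mul (by rw [← pow_succ]; exact ht')
    have hdiv : t / p^d = t' / p^d := by
      rwa [Nat.mod_eq_of_lt hdivt, Nat.mod_eq_of_lt hdivt'] at hdigN
    -- p^d ∣ A - B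
    have hAB : (p:ℤ)^d ∣ A - B := by
      have : (p:ℤ)^(d+1) ∣ (p:ℤ) * (A - B) := by
        have := hdvd'
        rw [hdig, zero_mul, add_zero] at this
        exact this
      rw [pow_succ'] at this
      exact (mul_dvd_mul_iff_left (by exact_mod_cast hppos.ne' : (p:ℤ) ≠ 0)).mp this
    -- digit invariance
    have hAmod : A = ∑ i ∈ range d, (((t % p^d) / p^i % p : ℕ):ℤ) * Ψ i * (p:ℤ)^(d-1-i) := by
      refine Finset.sum_congr rfl fun i hi => ?_
      rw [digit_of_mod p d i t (mem_range.mp hi)]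
    have hBmod : B = ∑ i ∈ range d, (((t' % p^d) / p^i % p : ℕ):ℤ) * Ψ i * (p:ℤ)^(d-1-i) := by
      refine Finset.sum_congr rfl fun i hi => ?_
      rw [digit_of_mod p d i t' (mem_range.mp hi)]
    have hmod : t % p^d = t' % p^d := by
      refine ih Ψ (fun i hi => hΨ i (hi.trans (Nat.lt_succ_self d)))
        (t % p^d) (t' % p^d) (Nat.mod_lt _ (pow_pos hppos d)) (Nat.mod_lt _ (pow_pos hppos d)) ?_
      rw [← hAmod, ← hBmod]; exact hAB
    have e1 := Nat.div_add_mod t (p^d)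
    have e2 := Nat.div_add_mod t' (p^d)
    have e3 : p^d * (t / p^d) + t % p^d = p^d * (t' / p^d) + t' % p^d := by
      rw [hdiv, hmod]
    omega


lemma gauss_int (q : ℕ) (hq : 0 < q) :
    (∑ r ∈ range q, (r:ℤ)) * 2 = (q:ℤ) * ((q:ℤ) - 1) := by
  have h := Finset.sum_range_id_mul_two q
  have h2 : ((q:ℤ) - 1) = ((q - 1 : ℕ) : ℤ) := by
    rw [Nat.cast_sub hq]; push_cast; ring
  rw [h2, ← Nat.cast_sum]; exact_mod_cast h

theorem sum_nu_ik_eq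
    (p n e m : ℕ) (hp : p.Prime) (hn : 1 ≤ n) (he : 1 ≤ e) (hen : e ≤ n) (hm : 1 ≤ m)
    (Φ : ℕ → ℤ) (δ : ℤ)
    (hΦ0 : ∀ j, j ≤ n - e → Φ j = 0)
    (hΦcop : ∀ j, n - e < j → j ≤ n → IsCoprime (Φ j) (p : ℤ))
    (hδ : δ = ((p : ℤ) - 1) * ∑ j ∈ Finset.Icc 1 n, Φ j * (p : ℤ) ^ (n - j)
        + ((p : ℤ) ^ e - 1)) :
    2 * ∑ k ∈ Finset.range (p ^ n),
        ⌊(((m : ℤ) * δ -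
            ∑ j ∈ Finset.Icc 1 n, (((k / p ^ (j - 1)) % p : ℕ) : ℤ) * Φ j * (p : ℤ) ^ (n - j)
            : ℤ) : ℚ) / (p : ℚ) ^ e⌋
      = (2 * (m : ℤ) - 1) * (p : ℤ) ^ (n - e) * δ := by
  have hppos := hp.pos
  have hpe : (0:ℕ) < p^e := pow_pos hppos e
  have hcast : ((p:ℚ))^e = ((p^e : ℕ) : ℚ) := by push_cast; ring
  simp only [hcast, Rat.floor_intCast_div_natCast]
  set Nz : ℤ := ((p^e : ℕ) : ℤ) with hNz
  have hNzpos : 0 < Nz := by rw [hNz]; exact_mod_cast hpe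
  have hNze : Nz = (p:ℤ)^e := by rw [hNz]; push_cast; ring
  set A : ℤ := (m:ℤ) * δ with hA
  set T : ℕ → ℤ :=
    fun t => ∑ i ∈ range e, ((t / p^i % p : ℕ):ℤ) * Φ (n-e+1+i) * (p:ℤ)^(e-1-i) with hT
  -- S k = T (k / p^(n-e))
  have hS : ∀ k, (∑ j ∈ Finset.Icc 1 n, ((k / p^(j-1) % p : ℕ):ℤ) * Φ j * (p:ℤ)^(n-j))
      = T (k / p^(n-e)) := by
    intro k
    rw [hT, show Finset.Icc 1 n = Finset.Ico 1 (n+1) from by rw [Finset.Ico_add_one_right_eq_Icc],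
      ← Finset.sum_Ico_consecutive _ (show 1 ≤ n-e+1 by omega) (show n-e+1 ≤ n+1 by omega)]
    have hzero : ∑ j ∈ Finset.Ico 1 (n-e+1), ((k / p^(j-1) % p : ℕ):ℤ) * Φ j * (p:ℤ)^(n-j)
        = 0 :=
      Finset.sum_eq_zero fun j hj => by
        rw [hΦ0 j (by have := Finset.mem_Ico.mp hj; omega)]; ring
    rw [hzero, zero_add, Finset.sum_Ico_eq_sum_range,
      show n + 1 - (n-e+1) = e from by omega]
    refine Finset.sum_congr rfl fun i hi => ?_
    have hi' := Finset.mem_range.mp hi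
    rw [Nat.div_div_eq_div_mul, ← pow_add,
      show n - e + i = n-e+1+i-1 from by omega,
      show e - 1 - i = n - (n-e+1+i) from by omega]
  simp only [hS]
  -- coprimality for the shifted coefficients
  have hcop : ∀ i, i < e → IsCoprime (Φ (n-e+1+i)) ((p:ℤ)) :=
    fun i hi => hΦcop _ (by omega) (by omega)
  -- the equidistribution
  set g : ℕ → ℕ := fun t => ((A - T t) % Nz).toNat with hgdef'
  have hgdef : ∀ t : ℕ, (A - T t) % Nz = ((g t : ℕ) : ℤ) :=
    fun t => (Int.toNat_of_nonneg (Int.emod_nonneg _ (ne_of_gt hNzpos))).symm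
  have hginj : ∀ t ∈ range (p^e), ∀ t' ∈ range (p^e), g t = g t' → t = t' := by
    intro t ht t' ht' hgt
    have h1 : (A - T t) % Nz = (A - T t') % Nz := by
      rw [hgdef t, hgdef t', hgt]
    have h2 : Nz ∣ (A - T t') - (A - T t) := Int.ModEq.dvd h1
    have h3 : (p:ℤ)^e ∣ T t - T t' := by
      rw [← hNze, show T t - T t' = (A - T t') - (A - T t) from by ring]
      exact h2
    exact V_inj p hp e (fun i => Φ (n-e+1+i)) hcop t t'
      (Finset.mem_range.mp ht) (Finset.mem_range.mp ht') h3
  have himg : Finset.image g (range (p^e)) = range (p^e) := by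
    apply Finset.eq_of_subset_of_card_le
    · intro v hv
      simp only [Finset.mem_image] at hv
      obtain ⟨t, ht, rfl⟩ := hv
      have h1 : (A - T t) % Nz < Nz := Int.emod_lt_of_pos _ hNzpos
      have h2 : 0 ≤ (A - T t) % Nz := Int.emod_nonneg _ (ne_of_gt hNzpos)
      rw [Finset.mem_range]
      have h3 : g t = ((A - T t) % Nz).toNat := rfl
      have h4 : Nz = ((p^e : ℕ) : ℤ) := hNz
      omega
    · rw [Finset.card_image_of_injOn fun a ha b hb hh => hginj a ha b hb hh]
  have hkey : ∑ t ∈ range (p^e), ((A - T t) % Nz) = ∑ v ∈ range (p^e), (v:ℤ) := by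
    calc ∑ t ∈ range (p^e), ((A - T t) % Nz) = ∑ t ∈ range (p^e), ((g t : ℕ) : ℤ) :=
          Finset.sum_congr rfl fun t _ => hgdef t
      _ = ∑ v ∈ Finset.image g (range (p^e)), (v:ℤ) := (Finset.sum_image hginj).symm
      _ = ∑ v ∈ range (p^e), (v:ℤ) := by rw [himg]
  -- sum of residues over all k
  have hmodsum : ∑ k ∈ range (p^n), ((A - T (k / p^(n-e))) % Nz)
      = ((p^(n-e) : ℕ):ℤ) * ∑ v ∈ range (p^e), (v:ℤ) := by
    rw [show p^n = p^(n-e) * p^e from by rw [← pow_add]; congr 1; omega,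
      sum_range_div' (p^(n-e)) (p^e) (pow_pos hppos _) (fun t => (A - T t) % Nz), hkey]
  have hgauss := gauss_int (p^e) hpe
  -- sum of the S k over all k
  have h2S : 2 * ∑ k ∈ range (p^n), ∑ j ∈ Finset.Icc 1 n,
        ((k / p^(j-1) % p : ℕ):ℤ) * Φ j * (p:ℤ)^(n-j)
      = (p:ℤ)^n * ((p:ℤ)-1) * ∑ j ∈ Finset.Icc 1 n, Φ j * (p:ℤ)^(n-j) := by
    rw [Finset.sum_comm, Finset.mul_sum, Finset.mul_sum]
    refine Finset.sum_congr rfl fun j hj => ?_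
    obtain ⟨hj1, hjn⟩ := Finset.mem_Icc.mp hj
    have hd := digit_sum' p hppos n j hj1 hjn
    simp only [mul_assoc]
    rw [← Finset.sum_mul]
    calc 2 * ((∑ k ∈ range (p^n), ((k / p^(j-1) % p : ℕ):ℤ)) * (Φ j * (p:ℤ)^(n-j)))
        = (2 * ∑ k ∈ range (p^n), ((k / p^(j-1) % p : ℕ):ℤ)) * (Φ j * (p:ℤ)^(n-j)) := by
          ring
      _ = (p:ℤ)^n * (((p:ℤ)-1) * (Φ j * (p:ℤ)^(n-j))) := by rw [hd]; ring
  -- total sum of X k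
  have hXsum : 2 * ∑ k ∈ range (p^n), (A - T (k / p^(n-e)))
      = (p:ℤ)^n * ((2*(m:ℤ)-1)*δ + (p:ℤ)^e - 1) := by
    have hback : ∀ k, A - T (k / p^(n-e))
        = A - ∑ j ∈ Finset.Icc 1 n, ((k / p^(j-1) % p : ℕ):ℤ) * Φ j * (p:ℤ)^(n-j) :=
      fun k => by rw [hS]
    rw [Finset.sum_congr rfl fun k _ => hback k, Finset.sum_sub_distrib,
      Finset.sum_const, Finset.card_range, nsmul_eq_mul, hA, Nat.cast_pow]
    linear_combination (-1:ℤ) * h2S + (p:ℤ)^n * hδ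
  -- final assembly
  apply mul_left_cancel₀ (ne_of_gt hNzpos)
  have hdm : ∀ k : ℕ, Nz * ((A - T (k / p^(n-e))) / Nz)
      = (A - T (k / p^(n-e))) - (A - T (k / p^(n-e))) % Nz := fun k => by
    have := Int.emod_add_mul_ediv (A - T (k / p^(n-e))) Nz
    linarith
  have hne' : ((p^(n-e):ℕ):ℤ) * Nz = (p:ℤ)^n := by
    rw [hNze]; push_cast; rw [← pow_add]; congr 1; omega
  calc Nz * (2 * ∑ k ∈ range (p^n), ((A - T (k / p^(n-e))) / Nz))
      = 2 * ∑ k ∈ range (p^n), (Nz * ((A - T (k / p^(n-e))) / Nz)) := by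
        rw [show Nz * (2 * ∑ k ∈ range (p^n), ((A - T (k / p^(n-e))) / Nz))
            = 2 * (Nz * ∑ k ∈ range (p^n), ((A - T (k / p^(n-e))) / Nz)) from by ring,
          Finset.mul_sum]
    _ = 2 * ∑ k ∈ range (p^n), ((A - T (k / p^(n-e))) - (A - T (k / p^(n-e))) % Nz) := by
        rw [Finset.sum_congr rfl fun k _ => hdm k]
    _ = 2 * ∑ k ∈ range (p^n), (A - T (k / p^(n-e)))
        - 2 * ∑ k ∈ range (p^n), ((A - T (k / p^(n-e))) % Nz) := by
        rw [Finset.sum_sub_distrib]; ring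
    _ = (p:ℤ)^n * ((2*(m:ℤ)-1)*δ + (p:ℤ)^e - 1)
        - ((p^(n-e):ℕ):ℤ) * (2 * ∑ v ∈ range (p^e), (v:ℤ)) := by
        rw [hXsum, hmodsum]; ring
    _ = (p:ℤ)^n * ((2*(m:ℤ)-1)*δ + (p:ℤ)^e - 1)
        - ((p^(n-e):ℕ):ℤ) * (Nz * (Nz - 1)) := by
        rw [show 2 * ∑ v ∈ range (p^e), (v:ℤ) = ((p^e:ℕ):ℤ) * (((p^e:ℕ):ℤ) - 1) from by
          linarith [hgauss], hNz]
    _ = Nz * ((2 * (m:ℤ) - 1) * (p:ℤ)^(n-e) * δ) := by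
        rw [hNze, Nat.cast_pow]
        have hpw : ((p:ℤ)^(n-e)) * ((p:ℤ)^e) = (p:ℤ)^n := by
          rw [← pow_add]; congr 1; omega
        linear_combination (-((2*(m:ℤ)-1)*δ + (p:ℤ)^e - 1)) * hpw
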